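/- Let f : (0,∞)^k → (0,∞) be globally operator monotone and define f⁺(X) := inf_{ε>0} f(X + εI) for commuting k-tuples X of positive invertible matrices. Then f⁺ = f on (0,∞)^k; in particular f is right-continuous along the directions X + εI. -/

import Mathlib

open Matrix
open scoped ComplexOrder

/-- Square complex matrices of size `d`. -/
abbrev Mat (d : ℕ) := Matrix (Fin d) (Fin d) ℂ

/-- Loewner order: `A ≤ B` iff `B - A` is positive semi-definite. -/
def Loewner {d : ℕ} (A B : Mat d) : Prop := (B - A).PosSemidef

/-- The diagonal complex matrix with real entries `v`. -/
noncomputable def cDiag {d : ℕ} (v : Fin d → ℝ) : Mat d :=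
  Matrix.diagonal (fun j => (v j : ℂ))

/-- `JointDiag X U a` : the `k`-tuple `X` of matrices is jointly diagonalized by
the unitary `U` with (strictly positive) joint eigenvalue lists `a i`; this
encodes that `X` is a pairwise commuting `k`-tuple of positive invertible
operators together with a joint spectral decomposition `X i = Uᴴ (diag (a i)) U`. -/
def JointDiag {k d : ℕ} (X : Fin k → Mat d) (U : Mat d) (a : Fin k → Fin d → ℝ) : Prop :=
  U ∈ Matrix.unitaryGroup (Fin d) ℂ ∧ (∀ i j, 0 < a i j) ∧ ∀ i, X i = Uᴴ * cDiag (a i) * U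

/-- The value `f(X)` of a real function `f : (0,∞)^k → ℝ` on the commuting tuple
jointly diagonalized as `X i = Uᴴ (diag (a i)) U`, via joint functional calculus:
`f(X) = Uᴴ f(Λ) U`. -/
noncomputable def applyF {k d : ℕ} (f : (Fin k → ℝ) → ℝ) (U : Mat d)
    (a : Fin k → Fin d → ℝ) : Mat d :=
  Uᴴ * cDiag (fun j => f (fun i => a i j)) * U

/-- `f : (0,∞)^k → (0,∞)` is globally operator monotone: for all commuting
`k`-tuples `X ≤ Y` (coordinatewise Loewner order) of positive invertible
matrices, `f(X) ≤ f(Y)`, where `f` is applied through (any) joint spectral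
decompositions. -/
def GloballyOpMonotone (k : ℕ) (f : (Fin k → ℝ) → ℝ) : Prop :=
  (∀ x : Fin k → ℝ, (∀ i, 0 < x i) → 0 < f x) ∧
  ∀ (d : ℕ) (X Y : Fin k → Mat d) (U V : Mat d) (a b : Fin k → Fin d → ℝ),
    JointDiag X U a → JointDiag Y V b → (∀ i, Loewner (X i) (Y i)) →
    Loewner (applyF f U a) (applyF f V b)

/-- A real symmetric `2 × 2` matrix with nonnegative diagonal and nonnegative
determinant is positive semidefinite (as a complex matrix). -/
lemma psd2 (a b d : ℝ) (ha : 0 ≤ a) (hd : 0 ≤ d) (hdet : b^2 ≤ a*d) :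
    (Matrix.of ![![(a:ℂ), (b:ℂ)], ![(b:ℂ), (d:ℂ)]]).PosSemidef := by
  rw [Matrix.posSemidef_iff_dotProduct_mulVec]
  constructor
  · ext i j
    fin_cases i <;> fin_cases j <;>
      simp [Matrix.conjTranspose_apply]
  · intro x
    have hx : star x ⬝ᵥ ((Matrix.of ![![(a:ℂ), (b:ℂ)], ![(b:ℂ), (d:ℂ)]]) *ᵥ x) =
        ((a * Complex.normSq (x 0) + 2 * b * ((starRingEnd ℂ) (x 0) * x 1).re
          + d * Complex.normSq (x 1) : ℝ) : ℂ) := by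
      simp [dotProduct, Matrix.mulVec, Fin.sum_univ_two, Complex.normSq_apply,
        Complex.ext_iff, Complex.add_re, Complex.add_im, Complex.mul_re, Complex.mul_im]
      constructor <;> ring
    rw [hx, Complex.zero_le_real]
    set p := Complex.normSq (x 0) with hp
    set q := Complex.normSq (x 1) with hq
    set t := ((starRingEnd ℂ) (x 0) * x 1).re with ht
    have hpq : t^2 ≤ p * q := by
      have h1 : t^2 ≤ Complex.normSq ((starRingEnd ℂ) (x 0) * x 1) := by
        rw [Complex.normSq_apply]; nlinarith [sq_nonneg (((starRingEnd ℂ) (x 0) * x 1).im)]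
      simpa [Complex.normSq_mul] using h1
    have hp0 : 0 ≤ p := Complex.normSq_nonneg _
    have hq0 : 0 ≤ q := Complex.normSq_nonneg _
    have hS : 0 ≤ a * p + d * q := by positivity
    have h4 : (2*b*t)^2 ≤ (a*p + d*q)^2 := by
      have h2 : b^2 * t^2 ≤ (a*d) * (p*q) :=
        mul_le_mul hdet hpq (sq_nonneg t) (mul_nonneg ha hd)
      nlinarith [sq_nonneg (a*p - d*q)]
    have h5 : -(a*p + d*q) ≤ 2*b*t := by nlinarith [h4, hS]
    linarith

/-- Scalar (coordinatewise) monotonicity of a globally operator monotone function,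
obtained from the `1 × 1` case. -/
lemma scalarMono {k : ℕ} {f : (Fin k → ℝ) → ℝ} (hf : GloballyOpMonotone k f)
    {y z : Fin k → ℝ} (hy : ∀ i, 0 < y i) (hz : ∀ i, 0 < z i)
    (hyz : ∀ i, y i ≤ z i) : f y ≤ f z := by
  have h1 : (1 : Mat 1) ∈ Matrix.unitaryGroup (Fin 1) ℂ := Submonoid.one_mem _
  have hJy : JointDiag (fun i => cDiag (fun _ : Fin 1 => y i)) 1 (fun i _ => y i) := by
    refine ⟨h1, fun i j => hy i, fun i => by simp⟩
  have hJz : JointDiag (fun i => cDiag (fun _ : Fin 1 => z i)) 1 (fun i _ => z i) := by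
    refine ⟨h1, fun i j => hz i, fun i => by simp⟩
  have hL : ∀ i, Loewner (cDiag (fun _ : Fin 1 => y i)) (cDiag (fun _ : Fin 1 => z i)) := by
    intro i
    unfold Loewner cDiag
    rw [Matrix.diagonal_sub]
    exact Matrix.posSemidef_diagonal_iff.mpr fun j => by
      rw [sub_nonneg]; exact_mod_cast hyz i
  have := hf.2 1 _ _ 1 1 _ _ hJy hJz hL
  unfold Loewner applyF at this
  have h2 := this
  rw [Matrix.conjTranspose_one, one_mul, one_mul, mul_one, mul_one] at h2
  have h3 := h2.dotProduct_mulVec_nonneg (fun _ => 1)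
  simp [cDiag, dotProduct, Matrix.mulVec, Fin.sum_univ_one] at h3
  simpa using h3

/-- The key `2 × 2` trace/pinching inequality coming from global operator
monotonicity: testing `f` on a rotated pair of eigenvalues against a diagonal
comparison matrix yields `s² f(x + εc²·1) + c² f(x - ε·1) ≤ f(x)`. -/
lemma keyIneq {k : ℕ} {f : (Fin k → ℝ) → ℝ} (hf : GloballyOpMonotone k f)
    {x : Fin k → ℝ} (hx : ∀ i, 0 < x i) {c s ε : ℝ}
    (hc : 0 < c) (hs : 0 < s) (hcs : c^2 + s^2 = 1) (hε : 0 < ε)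
    (hεx : ∀ i, ε < x i) :
    s^2 * f (fun i => x i + ε * c^2) + c^2 * f (fun i => x i - ε) ≤ f x := by
  set q : ℝ := (c^2 + 1) * c * s with hq
  set K : ℝ := c^4 - s^2 + (c^2+1)^2 * s^2 / c^2 with hK
  set U : Mat 2 := Matrix.of ![![(c:ℂ), s], ![-s, c]] with hU
  set a : Fin k → Fin 2 → ℝ := fun i => ![x i + ε * c^2, x i - ε] with ha
  set b : Fin k → Fin 2 → ℝ := fun i => ![x i + ε * K, x i] with hb
  have hc2 : (0:ℝ) < c^2 := by positivity
  have hKge : -1 ≤ K := by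
    rw [hK]
    have h1 : 0 ≤ (c^2+1)^2 * s^2 / c^2 := by positivity
    nlinarith [sq_nonneg c, sq_nonneg s]
  have hUu : U ∈ Matrix.unitaryGroup (Fin 2) ℂ := by
    rw [Matrix.mem_unitaryGroup_iff]
    ext i j
    fin_cases i <;> fin_cases j <;>
      · simp [hU, Matrix.mul_apply, Fin.sum_univ_two, Matrix.conjTranspose_apply,
          Matrix.one_apply, Complex.ext_iff]
        ring_nf
        try linarith [hcs]
  have hJX : JointDiag (fun i => Uᴴ * cDiag (a i) * U) U a := by
    refine ⟨hUu, fun i j => ?_, fun i => rfl⟩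
    fin_cases j
    · simp [ha]; nlinarith [hx i, hε, hc2]
    · simp [ha]; linarith [hεx i]
  have hJY : JointDiag (fun i => cDiag (b i)) 1 b := by
    refine ⟨Submonoid.one_mem _, fun i j => ?_, fun i => by simp⟩
    fin_cases j
    · simp [hb]; nlinarith [hεx i, hε, hKge]
    · simp [hb]; exact hx i
  have hcsC : (c:ℂ)^2 + (s:ℂ)^2 = 1 := by exact_mod_cast hcs
  have hLoew : ∀ i, Loewner (Uᴴ * cDiag (a i) * U) (cDiag (b i)) := by
    intro i
    unfold Loewner
    have hEq : cDiag (b i) - Uᴴ * cDiag (a i) * U =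
        Matrix.of ![![((ε * (K - c^4 + s^2) : ℝ) : ℂ), ((-(ε*q) : ℝ) : ℂ)],
          ![((-(ε*q) : ℝ) : ℂ), ((ε * c^4 : ℝ) : ℂ)]] := by
      have hKq : (K:ℂ) = (c:ℂ)^4 - (s:ℂ)^2 + ((c:ℂ)^2+1)^2 * (s:ℂ)^2 / (c:ℂ)^2 := by
        rw [hK]; push_cast; ring
      have hcC : (c:ℂ) ≠ 0 := by exact_mod_cast hc.ne'
      ext i' j'
      fin_cases i' <;> fin_cases j' <;>
        · simp [hU, ha, hb, hq, cDiag, Matrix.mul_apply, Fin.sum_univ_two,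
            Matrix.conjTranspose_apply, Matrix.diagonal_apply, Complex.star_def,
            Complex.conj_ofReal]
          push_cast [hKq]
          try field_simp
          try ring
          try linear_combination (-(x i : ℂ)) * (c:ℂ)^2 * hcsC
          try linear_combination (-((x i : ℂ) + (ε:ℂ) * (c:ℂ)^2)) * hcsC
    rw [hEq]
    have hKval : ε * (K - c^4 + s^2) = ε * ((c^2+1)^2 * s^2 / c^2) := by rw [hK]; ring
    apply psd2
    · rw [hKval]; positivity
    · positivity
    · rw [hq, hKval]
      have : (-(ε * ((c ^ 2 + 1) * c * s)))^2 = (ε * ((c^2+1)^2 * s^2 / c^2)) * (ε * c^4) := by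
        field_simp
      rw [this]
  have hmain := hf.2 2 _ _ U 1 a b hJX hJY hLoew
  unfold Loewner applyF at hmain
  have hquad := hmain.dotProduct_mulVec_nonneg ![0, 1]
  simp [cDiag, hU, ha, hb, dotProduct, Matrix.mulVec, Matrix.mul_apply,
    Fin.sum_univ_two, Matrix.conjTranspose_apply, Matrix.diagonal_apply, Complex.star_def,
    Complex.conj_ofReal] at hquad
  norm_cast at hquad
  nlinarith [hquad]

/-- for a globally operator monotone `f : (0,∞)^k → (0,∞)`, the
right-regularization `f⁺(x) := inf_{ε>0} f(x + ε·1)` coincides with `f` on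
`(0,∞)^k`; in particular `f` is right-continuous along the directions `x + ε·1`. -/
theorem stmt5 (k : ℕ) (f : (Fin k → ℝ) → ℝ) (hf : GloballyOpMonotone k f) :
    ∀ x : Fin k → ℝ, (∀ i, 0 < x i) →
      (⨅ ε : {ε : ℝ // 0 < ε}, f (fun i => x i + (ε : ℝ))) = f x ∧
      Filter.Tendsto (fun ε : ℝ => f (fun i => x i + ε))
        (nhdsWithin 0 (Set.Ioi 0)) (nhds (f x)) := by
  intro x hx
  have hbdd : BddBelow (Set.range fun ε : {ε : ℝ // 0 < ε} => f (fun i => x i + (ε : ℝ))) := by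
    refine ⟨0, fun v hv => ?_⟩
    obtain ⟨ε, rfl⟩ := hv
    exact le_of_lt (hf.1 _ (fun i => by have := ε.2; have := hx i; positivity))
  have hmono : ∀ ε : ℝ, 0 < ε → f x ≤ f (fun i => x i + ε) := by
    intro ε hε
    exact scalarMono hf hx (fun i => by have := hx i; positivity)
      (fun i => by linarith)
  have hge : f x ≤ ⨅ ε : {ε : ℝ // 0 < ε}, f (fun i => x i + (ε : ℝ)) :=
    le_ciInf fun ε => hmono ε ε.2
  -- a uniform positive margin below x
  obtain ⟨ε₀, hε₀pos, hε₀x⟩ : ∃ t : ℝ, 0 < t ∧ ∀ i, t < x i := by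
    rcases isEmpty_or_nonempty (Fin k) with h | h
    · exact ⟨1, one_pos, fun i => (h.false i).elim⟩
    · obtain ⟨i₀, -, hi₀⟩ := Finset.exists_min_image Finset.univ x ⟨Classical.arbitrary _,
        Finset.mem_univ _⟩
      exact ⟨x i₀ / 2, by linarith [hx i₀],
        fun i => by have := hi₀ i (Finset.mem_univ i); linarith [hx i₀]⟩
  set L : ℝ := ⨅ ε : {ε : ℝ // 0 < ε}, f (fun i => x i + (ε : ℝ)) with hLdef
  set m : ℝ := f (fun i => x i - ε₀) with hm
  have hkey : ∀ s : ℝ, 0 < s → s < 1 → s^2 * L + (1 - s^2) * m ≤ f x := by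
    intro s hs hs1
    set c : ℝ := Real.sqrt (1 - s^2) with hc
    have h1s : (0:ℝ) < 1 - s^2 := by nlinarith
    have hcpos : 0 < c := Real.sqrt_pos.mpr h1s
    have hc2 : c^2 = 1 - s^2 := Real.sq_sqrt h1s.le
    have hcs : c^2 + s^2 = 1 := by rw [hc2]; ring
    have hKI := keyIneq hf hx hcpos hs hcs hε₀pos hε₀x
    have hF : L ≤ f (fun i => x i + ε₀ * c^2) := by
      have := ciInf_le hbdd ⟨ε₀ * c^2, by positivity⟩
      simpa using this
    rw [← hm] at hKI
    have h5 : s^2 * L ≤ s^2 * f (fun i => x i + ε₀ * c^2) :=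
      mul_le_mul_of_nonneg_left hF (sq_nonneg s)
    have h6 : c^2 * m = (1 - s^2) * m := by rw [hc2]
    linarith [hKI, h5, h6]
  have hle : L ≤ f x := by
    by_contra hcon
    push_neg at hcon
    have hmfx : m ≤ f x :=
      scalarMono hf (fun i => by have := hε₀x i; linarith) hx (fun i => by linarith)
    have hD : 0 ≤ L - m := by linarith
    set e : ℝ := L - f x with he
    have hepos : 0 < e := by simp [he]; linarith
    -- choose s with (1 - s^2) small
    set t : ℝ := min (1/2) (e / (2 * (L - m + 1))) with htdef
    have htpos : 0 < t := by
      apply lt_min (by norm_num)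
      positivity
    have ht1 : t < 1 := lt_of_le_of_lt (min_le_left _ _) (by norm_num)
    set s : ℝ := Real.sqrt (1 - t) with hs
    have hspos : 0 < s := Real.sqrt_pos.mpr (by linarith)
    have hs2 : s^2 = 1 - t := Real.sq_sqrt (by linarith)
    have hslt : s < 1 := by
      nlinarith [hs2, hspos]
    have := hkey s hspos hslt
    rw [hs2] at this
    -- this : (1 - t) * L + t * m ≤ f x, i.e. e = L - f x ≤ t * (L - m)
    have h2 : e ≤ t * (L - m) := by linarith
    have h3 : t * (L - m) ≤ (e / (2 * (L - m + 1))) * (L - m) := by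
      apply mul_le_mul_of_nonneg_right (min_le_right _ _) hD
    have h4 : (e / (2 * (L - m + 1))) * (L - m) < e := by
      rw [div_mul_eq_mul_div, div_lt_iff₀ (by linarith)]
      nlinarith
    linarith
  have hinf : L = f x := le_antisymm hle hge
  refine ⟨hinf, ?_⟩
  rw [tendsto_order]
  constructor
  · intro b hb
    filter_upwards [self_mem_nhdsWithin] with ε hε
    exact lt_of_lt_of_le hb (hmono ε hε)
  · intro b hb
    have : ∃ ε : {ε : ℝ // 0 < ε}, f (fun i => x i + (ε : ℝ)) < b := by
      by_contra hcon
      push_neg at hcon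
      have : b ≤ L := le_ciInf hcon
      rw [hinf] at this
      linarith
    obtain ⟨ε₁, hε₁⟩ := this
    filter_upwards [Ioo_mem_nhdsGT_of_mem
      (Set.mem_Ico.mpr ⟨le_refl (0:ℝ), ε₁.2⟩)] with ε hε
    calc f (fun i => x i + ε) ≤ f (fun i => x i + (ε₁ : ℝ)) := by
          apply scalarMono hf (fun i => by linarith [hx i, hε.1])
            (fun i => by linarith [hx i, ε₁.2])
            (fun i => by linarith [hε.2])
      _ < b := hε₁
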